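/- For every two distinct non-empty sequences A and A' of non-negative integers, the sparse encoding ⟨A⟩ is a prefix of the sparse encoding ⟨A'⟩ if and only if A is a (proper) prefix of A' and it is not the case that both A'[|A|−1] = 0 and A'[|A|] = 0. -/

import Mathlib

namespace SyncFormal

/-- The fragment `T[i..j)` of a string `T`. -/
def frag {α : Type*} (T : List α) (i j : ℕ) : List α :=
  (T.drop i).take (j - i)

/-- `p` is a period of the string `S`. -/
def IsPeriod {α : Type*} (S : List α) (p : ℕ) : Prop :=
  1 ≤ p ∧ p ≤ S.length ∧ ∀ i : ℕ, i + p < S.length → S[i]? = S[i + p]?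

/-- `per S`: the smallest period of `S`. -/
noncomputable def per {α : Type*} (S : List α) : ℕ :=
  sInf {p | IsPeriod S p}

/-- `Sync` is a `τ`-synchronizing set of `T`. -/
def IsSyncSet {α : Type*} (T : List α) (τ : ℕ) (Sync : Set ℕ) : Prop :=
  (∀ i ∈ Sync, i + 2 * τ ≤ T.length) ∧
  (∀ i j : ℕ, i + 2 * τ ≤ T.length → j + 2 * τ ≤ T.length → i ∈ Sync →
    frag T i (i + 2 * τ) = frag T j (j + 2 * τ) → j ∈ Sync) ∧
  (∀ i : ℕ, i + 3 * τ ≤ T.length + 1 →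
    (Set.Ico i (i + τ) ∩ Sync = ∅ ↔ 3 * per (frag T i (i + 3 * τ - 1)) ≤ τ))

/-- `T[b..e)` is a run (maximal repetition) in `T`. -/
def IsRun {α : Type*} (T : List α) (b e : ℕ) : Prop :=
  b < e ∧ e ≤ T.length ∧
  2 * per (frag T b e) ≤ e - b ∧
  (b = 0 ∨ T[b - 1]? ≠ T[b - 1 + per (frag T b e)]?) ∧
  (e = T.length ∨ T[e]? ≠ T[e - per (frag T b e)]?)

/-- `T[b..e)` is a run of length at least `ℓ` and period at most `p`
(i.e., an element of `RUNS_{ℓ,p}(T)`). -/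
def IsRunLP {α : Type*} (T : List α) (ℓ p b e : ℕ) : Prop :=
  IsRun T b e ∧ ℓ ≤ e - b ∧ per (frag T b e) ≤ p

/-- `λ_k = (8/7)^⌊k/2⌋`. -/
noncomputable def lam (k : ℕ) : ℝ := (8 / 7 : ℝ) ^ (k / 2)

/-- `α_0 = 1`, `α_{k+1} = α_k + ⌊λ_k⌋`. -/
noncomputable def alph : ℕ → ℕ
  | 0 => 1
  | k + 1 => alph k + ⌊lam k⌋₊

/-- `m`-fold concatenation `R^m`. -/
def listPow {α : Type*} (R : List α) : ℕ → List α
  | 0 => []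
  | m + 1 => R ++ listPow R m

/-- The length of the primitive root of `S`
(the shortest prefix `R` of `S` with `S = R^m` for some `m ≥ 1`). -/
noncomputable def primRootLen {α : Type*} (S : List α) : ℕ :=
  sInf {r | 0 < r ∧ ∃ m : ℕ, 1 ≤ m ∧ S = listPow (S.take r) m}

/-- `i` and `j` are consecutive elements of the set `S`. -/
def Consecutive (S : Set ℕ) (i j : ℕ) : Prop :=
  i ∈ S ∧ j ∈ S ∧ i < j ∧ ∀ m ∈ S, m ≤ i ∨ j ≤ m

/-- `(B k)_{k ∈ ℕ}` is a recompression chain for `T`. -/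
def IsRecompressionChain {α : Type*} (T : List α) (B : ℕ → Set ℕ) : Prop :=
  B 0 = Set.Ico 1 T.length ∧
  (∀ k, B (k + 1) ⊆ B k) ∧
  (∀ k, B k ⊆ Set.Ico 1 T.length) ∧
  (∀ k, (B k).Finite ∧ ((B k).ncard : ℝ) * lam k ≤ 4 * T.length) ∧
  (∀ k i j : ℕ, alph k ≤ i → i + alph k ≤ T.length → alph k ≤ j → j + alph k ≤ T.length →
    i ∈ B k → frag T (i - alph k) (i + alph k) = frag T (j - alph k) (j + alph k) → j ∈ B k) ∧
  (∀ k i j : ℕ, Consecutive (B k ∪ {0, T.length}) i j →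
    (((j - i : ℕ) : ℝ) ≤ 7 / 4 * lam k ∨ (primRootLen (frag T i j) : ℝ) ≤ lam k))

/-- `k(τ) = max{ j : j = 0 ∨ 16·λ_{j-1} ≤ τ }`. -/
noncomputable def kOf (τ : ℕ) : ℕ :=
  sSup {j : ℕ | j = 0 ∨ 16 * lam (j - 1) ≤ (τ : ℝ)}

/-- The Elias-γ code of a positive integer `x`:
`⌊log₂ x⌋` zeros followed by the binary representation of `x` (MSB first). -/
def eliasGamma (x : ℕ) : List Bool :=
  List.replicate (Nat.log 2 x) false ++ (Nat.bits x).reverse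

/-- Sparse encoding, with `z` pending zeros in front of the remaining sequence. -/
def sparseEncAux : ℕ → List ℕ → List Bool
  | z, [] => if z = 0 then [] else false :: eliasGamma z
  | z, 0 :: rest => sparseEncAux (z + 1) rest
  | z, x :: rest =>
      (if z = 0 then [] else false :: eliasGamma z) ++ (true :: eliasGamma x)
        ++ sparseEncAux 0 rest

/-- The sparse encoding `⟨A⟩` of a sequence of non-negative integers. -/
def sparseEnc (A : List ℕ) : List Bool := sparseEncAux 0 A

/-- Number of bits contributed by the zero-run tokens of the sparse encoding,
with `z` pending zeros. -/
def zeroRunBitsAux : ℕ → List ℕ → ℕ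
  | z, [] => if z = 0 then 0 else 2 * Nat.log 2 z + 2
  | z, 0 :: rest => zeroRunBitsAux (z + 1) rest
  | z, _ :: rest => (if z = 0 then 0 else 2 * Nat.log 2 z + 2) + zeroRunBitsAux 0 rest

/-- Number of bits contributed by zero-run tokens to `⟨A⟩`. -/
def zeroRunBits (A : List ℕ) : ℕ := zeroRunBitsAux 0 A

/-- The natural number whose binary representation (MSB first) is `B`. -/
def bitsToNat (B : List Bool) : ℕ :=
  B.foldl (fun n b => 2 * n + cond b 1 0) 0

/-- The symbol of the zipped string for a column of values. -/
def zipSym (col : List ℕ) : ℕ :=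
  if col.all (· == 0) then 0 else bitsToNat (sparseEnc col)

/-- `zip(A_1, …, A_t)` for sequences of common length `n`. -/
def zipSeqs (A : List (List ℕ)) (n : ℕ) : List ℕ :=
  (List.range n).map fun i => zipSym (A.map fun S => S.getD i 0)

/-- Running a deterministic transducer with transition function `δ` from state `s`
on an input string: returns the state sequence `s_0, …, s_n` and the output string. -/
def runAux {Q Γ I : Type*} (δ : Q → I → Q × Γ) : Q → List I → List Q × List Γ
  | s, [] => ([s], [])
  | s, x :: xs =>
      (s :: (runAux δ (δ s x).1 xs).1, (δ s x).2 :: (runAux δ (δ s x).1 xs).2)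

/-- `R_{ℓ,p}(T) = { i : per(T[i..i+ℓ)) ≤ p }`. -/
def RSet {α : Type*} (T : List α) (ℓ p : ℕ) : Set ℕ :=
  {i | i + ℓ ≤ T.length ∧ per (frag T i (i + ℓ)) ≤ p}

/-! ### Auxiliary material for Statement 6 -/

private def natOfBitsLSB : List Bool → ℕ
  | [] => 0
  | b :: l => Nat.bit b (natOfBitsLSB l)

private lemma bodd_true_of (n : ℕ) (hn : n ≠ 0) (h0 : n.div2 = 0) : n.bodd = true := by
  cases hb : n.bodd with
  | true => rfl
  | false =>
    exfalso; apply hn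
    have h := Nat.bit_bodd_div2 n
    rw [hb, h0] at h
    simpa [Nat.bit_val] using h.symm

private lemma bits_eq_cons {n : ℕ} (hn : n ≠ 0) : n.bits = n.bodd :: n.div2.bits := by
  conv_lhs => rw [← Nat.bit_bodd_div2 n]
  exact Nat.bits_append_bit _ _ (fun h0 => bodd_true_of n hn h0)

private lemma div2_lt {n : ℕ} (hn : n ≠ 0) : n.div2 < n := by
  rw [Nat.div2_val]; exact Nat.div_lt_self (Nat.pos_of_ne_zero hn) (by norm_num)

private lemma natOfBits_bits (n : ℕ) : natOfBitsLSB n.bits = n := by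
  induction n using Nat.strong_induction_on with
  | _ n ih =>
    rcases eq_or_ne n 0 with rfl | hn
    · simp [natOfBitsLSB, Nat.zero_bits]
    · rw [bits_eq_cons hn]
      show Nat.bit n.bodd (natOfBitsLSB n.div2.bits) = n
      rw [ih _ (div2_lt hn), Nat.bit_bodd_div2]

private lemma bits_injective {a b : ℕ} (h : a.bits = b.bits) : a = b := by
  rw [← natOfBits_bits a, ← natOfBits_bits b, h]

private lemma bits_getLast? (n : ℕ) (hn : n ≠ 0) : n.bits.getLast? = some true := by
  induction n using Nat.strong_induction_on with
  | _ n ih =>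
    rw [bits_eq_cons hn]
    rcases eq_or_ne n.div2 0 with h0 | h0
    · rw [bodd_true_of n hn h0, h0, Nat.zero_bits]
      rfl
    · rw [bits_eq_cons h0, List.getLast?_cons_cons, ← bits_eq_cons h0]
      exact ih _ (div2_lt hn) h0

private lemma size_eq_log_succ {n : ℕ} (hn : n ≠ 0) : n.size = Nat.log 2 n + 1 :=
  le_antisymm (Nat.size_le.mpr (Nat.lt_pow_succ_log_self (by norm_num) n))
    (Nat.succ_le_of_lt (Nat.lt_size.mpr (Nat.pow_log_le_self 2 hn)))

private lemma prefix_getElem? {α : Type*} {l1 l2 : List α} (h : l1 <+: l2) {i : ℕ}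
    (hi : i < l1.length) : l2[i]? = l1[i]? := by
  obtain ⟨t, rfl⟩ := h
  exact List.getElem?_append_left hi

private lemma eliasGamma_length {x : ℕ} (hx : x ≠ 0) :
    (eliasGamma x).length = 2 * Nat.log 2 x + 1 := by
  rw [eliasGamma, List.length_append, List.length_replicate, List.length_reverse,
    Nat.size_eq_bits_len, size_eq_log_succ hx]
  ring

private lemma eliasGamma_getElem_lt {x i : ℕ} (hi : i < Nat.log 2 x) :
    (eliasGamma x)[i]? = some false := by
  rw [eliasGamma, List.getElem?_append_left (by simpa using hi), List.getElem?_replicate,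
    if_pos hi]

private lemma eliasGamma_getElem_log {x : ℕ} (hx : x ≠ 0) :
    (eliasGamma x)[Nat.log 2 x]? = some true := by
  rw [eliasGamma, List.getElem?_append_right (by simp), List.length_replicate, Nat.sub_self,
    ← List.head?_eq_getElem?, List.head?_reverse, bits_getLast? x hx]

private lemma gamma_prefix_eq {x y : ℕ} (hx : x ≠ 0) (hy : y ≠ 0) {w : List Bool}
    (h : eliasGamma x <+: eliasGamma y ++ w) : x = y := by
  have hlx := eliasGamma_length hx
  have hly := eliasGamma_length hy
  rcases lt_trichotomy (Nat.log 2 x) (Nat.log 2 y) with hlt | heq | hgt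
  · exfalso
    have h1 : (eliasGamma y ++ w)[Nat.log 2 x]? = (eliasGamma x)[Nat.log 2 x]? :=
      prefix_getElem? h (by omega)
    rw [eliasGamma_getElem_log hx, List.getElem?_append_left (by omega),
      eliasGamma_getElem_lt hlt] at h1
    exact absurd h1 (by simp)
  · have hpre : eliasGamma x <+: eliasGamma y :=
      List.prefix_of_prefix_length_le h (List.prefix_append _ _) (by omega)
    have heq2 : eliasGamma x = eliasGamma y := hpre.eq_of_length (by omega)
    rw [eliasGamma, eliasGamma] at heq2
    have h2 := (List.append_inj heq2 (by simp [heq])).2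
    exact bits_injective (List.reverse_injective h2)
  · exfalso
    have h1 : (eliasGamma y ++ w)[Nat.log 2 y]? = (eliasGamma x)[Nat.log 2 y]? :=
      prefix_getElem? h (by omega)
    rw [List.getElem?_append_left (by omega), eliasGamma_getElem_log hy,
      eliasGamma_getElem_lt hgt] at h1
    exact absurd h1 (by simp)

private lemma gamma_eq_of_prefix {x y : ℕ} (hx : x ≠ 0) (hy : y ≠ 0) {u w : List Bool}
    (h : eliasGamma x ++ u <+: eliasGamma y ++ w) : x = y :=
  gamma_prefix_eq hx hy ((List.prefix_append _ _).trans h)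

private lemma enc_nil (z : ℕ) :
    sparseEncAux z [] = if z = 0 then [] else false :: eliasGamma z := rfl

private lemma enc_zero (z : ℕ) (r : List ℕ) :
    sparseEncAux z (0 :: r) = sparseEncAux (z + 1) r := rfl

private lemma enc_pos (z x : ℕ) (r : List ℕ) :
    sparseEncAux z ((x + 1) :: r) =
      (if z = 0 then [] else false :: eliasGamma z) ++ (true :: eliasGamma (x + 1))
        ++ sparseEncAux 0 r := rfl

private lemma enc_shape : ∀ (A : List ℕ) (w : ℕ), w ≠ 0 →
    ∃ z tail, w ≤ z ∧ z ≠ 0 ∧ sparseEncAux w A = (false :: eliasGamma z) ++ tail := by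
  intro A
  induction A with
  | nil =>
    intro w hw
    exact ⟨w, [], le_refl w, hw, by rw [enc_nil, if_neg hw, List.append_nil]⟩
  | cons x rest ih =>
    intro w hw
    rcases x with _ | x
    · obtain ⟨z, tail, hz, hz0, he⟩ := ih (w + 1) (by omega)
      exact ⟨z, tail, by omega, hz0, by rw [enc_zero, he]⟩
    · exact ⟨w, (true :: eliasGamma (x + 1)) ++ sparseEncAux 0 rest, le_refl w, hw,
        by rw [enc_pos, if_neg hw, List.append_assoc]⟩

/-- `0^z ++ A` ends with the symbol `0`. -/
private def ends0 (z : ℕ) (A : List ℕ) : Prop :=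
  (List.replicate z (0 : ℕ) ++ A).getLast? = some 0

private lemma ends0_nil (z : ℕ) : ends0 z [] ↔ z ≠ 0 := by
  unfold ends0
  rw [List.append_nil, List.getLast?_replicate]
  rcases eq_or_ne z 0 with rfl | hz
  · simp
  · simp [hz]

private lemma ends0_cons_zero (z : ℕ) (A : List ℕ) : ends0 z (0 :: A) ↔ ends0 (z + 1) A := by
  unfold ends0
  rw [List.replicate_succ', List.append_assoc, List.singleton_append]

private lemma ends0_cons_pos (z a : ℕ) (A : List ℕ) : ends0 z ((a + 1) :: A) ↔ ends0 0 A := by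
  unfold ends0
  rcases List.eq_nil_or_concat A with rfl | ⟨l, x, rfl⟩
  all_goals try simp only [List.concat_eq_append]
  · rw [List.getLast?_concat]
    simp
  · rw [show List.replicate z (0 : ℕ) ++ ((a + 1) :: (l ++ [x]))
        = (List.replicate z 0 ++ ((a + 1) :: l)) ++ [x] by simp,
      List.getLast?_concat,
      show List.replicate 0 (0 : ℕ) ++ (l ++ [x]) = l ++ [x] by simp,
      List.getLast?_concat]

private lemma master : ∀ (A : List ℕ) (z : ℕ) (A' : List ℕ),
    sparseEncAux z A <+: sparseEncAux z A' ↔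
      ∃ B, A' = A ++ B ∧ ¬(ends0 z A ∧ B.headD 1 = 0) := by
  intro A
  induction A with
  | nil =>
    intro z A'
    rcases eq_or_ne z 0 with rfl | hz
    · constructor
      · intro _
        exact ⟨A', by simp, by simp [ends0_nil]⟩
      · intro _
        rw [enc_nil, if_pos rfl]
        exact List.nil_prefix
    · rcases A' with _ | ⟨b, r⟩
      · constructor
        · intro _; exact ⟨[], by simp, by simp⟩
        · intro _; exact List.prefix_refl _
      · rcases b with _ | b
        · rw [enc_nil, if_neg hz, enc_zero]
          constructor
          · intro h
            exfalso
            obtain ⟨z', tail, hz', hz0, he⟩ := enc_shape r (z + 1) (by omega)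
            rw [he, List.cons_append, List.cons_prefix_cons] at h
            have := gamma_prefix_eq hz hz0 h.2
            omega
          · rintro ⟨B, hB, hc⟩
            exfalso
            apply hc
            have hB' : B = 0 :: r := by simpa using hB.symm
            exact ⟨(ends0_nil z).mpr hz, by simp [hB']⟩
        · rw [enc_nil, if_neg hz, enc_pos, if_neg hz]
          constructor
          · intro _
            exact ⟨(b + 1) :: r, rfl, by simp⟩
          · intro _
            rw [List.append_assoc]
            exact List.prefix_append _ _
  | cons a t ih =>
    intro z A'
    rcases a with _ | a
    · -- A = 0 :: t
      rw [enc_zero]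
      rcases A' with _ | ⟨b, r⟩
      · constructor
        · intro h
          exfalso
          obtain ⟨z', tail, hz', hz0, he⟩ := enc_shape t (z + 1) (by omega)
          rw [he, enc_nil] at h
          rcases eq_or_ne z 0 with rfl | hz
          · rw [if_pos rfl, List.prefix_nil] at h
            simp at h
          · rw [if_neg hz, List.cons_append, List.cons_prefix_cons] at h
            have h2 : eliasGamma z' ++ tail <+: eliasGamma z ++ [] := by
              simpa using h.2
            have := gamma_eq_of_prefix hz0 hz h2
            omega
        · rintro ⟨B, hB, -⟩
          exact absurd hB (by simp)
      · rcases b with _ | b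
        · -- A' = 0 :: r
          rw [enc_zero, ih (z + 1) r]
          constructor
          · rintro ⟨B, hB, hc⟩
            exact ⟨B, by rw [hB, List.cons_append],
              fun hh => hc ⟨(ends0_cons_zero z t).mp hh.1, hh.2⟩⟩
          · rintro ⟨B, hB, hc⟩
            rw [List.cons_append] at hB
            injection hB with _ hB'
            exact ⟨B, hB', fun hh => hc ⟨(ends0_cons_zero z t).mpr hh.1, hh.2⟩⟩
        · -- A' = (b+1) :: r
          rw [enc_pos]
          constructor
          · intro h
            exfalso
            obtain ⟨z', tail, hz', hz0, he⟩ := enc_shape t (z + 1) (by omega)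
            rw [he] at h
            rcases eq_or_ne z 0 with rfl | hz
            · rw [if_pos rfl, List.nil_append, List.cons_append, List.cons_append,
                List.cons_prefix_cons] at h
              simp at h
            · rw [if_neg hz] at h
              simp only [List.cons_append, List.append_assoc] at h
              rw [List.cons_prefix_cons] at h
              have := gamma_eq_of_prefix hz0 hz h.2
              omega
          · rintro ⟨B, hB, -⟩
            rw [List.cons_append] at hB
            exact absurd hB (by simp)
    · -- A = (a+1) :: t
      rw [enc_pos]
      rcases A' with _ | ⟨b, r⟩
      · rw [enc_nil]
        constructor
        · intro h
          exfalso
          rcases eq_or_ne z 0 with rfl | hz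
          · simp at h
          · rw [if_neg hz] at h
            have hl := h.length_le
            simp only [List.length_append, List.length_cons] at hl
            omega
        · rintro ⟨B, hB, -⟩
          exact absurd hB (by simp)
      · rcases b with _ | b
        · -- A' = 0 :: r
          rw [enc_zero]
          constructor
          · intro h
            exfalso
            obtain ⟨z', tail, hz', hz0, he⟩ := enc_shape r (z + 1) (by omega)
            rw [he] at h
            rcases eq_or_ne z 0 with rfl | hz
            · rw [if_pos rfl, List.nil_append, List.cons_append, List.cons_append,
                List.cons_prefix_cons] at h
              simp at h
            · rw [if_neg hz] at h
              simp only [List.cons_append, List.append_assoc] at h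
              rw [List.cons_prefix_cons] at h
              have := gamma_eq_of_prefix hz hz0 h.2
              omega
          · rintro ⟨B, hB, -⟩
            rw [List.cons_append] at hB
            exact absurd hB (by simp)
        · -- A' = (b+1) :: r
          rw [enc_pos, List.append_assoc, List.append_assoc, List.prefix_append_right_inj,
            List.cons_append, List.cons_append, List.cons_prefix_cons]
          constructor
          · rintro ⟨-, h2⟩
            have hab : a + 1 = b + 1 :=
              gamma_eq_of_prefix (Nat.succ_ne_zero a) (Nat.succ_ne_zero b) h2
            have hab' : a = b := by omega
            subst hab'
            rw [List.prefix_append_right_inj] at h2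
            obtain ⟨B, hB, hc⟩ := (ih 0 r).mp h2
            exact ⟨B, by rw [hB, List.cons_append],
              fun hh => hc ⟨(ends0_cons_pos z a t).mp hh.1, hh.2⟩⟩
          · rintro ⟨B, hB, hc⟩
            rw [List.cons_append] at hB
            injection hB with h1 h2
            have hab' : a = b := by omega
            subst hab'
            refine ⟨rfl, ?_⟩
            rw [List.prefix_append_right_inj]
            exact (ih 0 r).mpr ⟨B, h2, fun hh => hc ⟨(ends0_cons_pos z a t).mpr hh.1, hh.2⟩⟩

private lemma getD_last {A B : List ℕ} (hA : A ≠ []) :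
    (A ++ B).getD (A.length - 1) 0 = 0 ↔ ends0 0 A := by
  have hlt : A.length - 1 < A.length := by
    have := List.length_pos_iff.mpr hA; omega
  have hlt2 : A.length - 1 < (A ++ B).length := by
    rw [List.length_append]; omega
  rw [List.getD_eq_getElem _ _ hlt2, List.getElem_append_left hlt]
  unfold ends0
  rw [show List.replicate 0 (0 : ℕ) ++ A = A by simp, List.getLast?_eq_getElem?,
    List.getElem?_eq_getElem hlt]
  simp

private lemma getD_head {A B : List ℕ} (hB : B ≠ []) :
    (A ++ B).getD A.length 0 = 0 ↔ B.headD 1 = 0 := by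
  have hlt : A.length < (A ++ B).length := by
    rw [List.length_append]
    have := List.length_pos_iff.mpr hB; omega
  rw [List.getD_eq_getElem?_getD, List.getElem?_append_right (le_refl _), Nat.sub_self]
  rcases B with _ | ⟨b, B⟩
  · exact absurd rfl hB
  · simp

/-- For distinct non-empty `A, A'`, `⟨A⟩` is a prefix of `⟨A'⟩` iff
`A` is a (proper) prefix of `A'` and not both `A'[|A|−1] = 0` and `A'[|A|] = 0`. -/
theorem statement6 (A A' : List ℕ) (hA : A ≠ []) (hA' : A' ≠ []) (hne : A ≠ A') :
    sparseEnc A <+: sparseEnc A' ↔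
      (A <+: A' ∧ ¬(A'.getD (A.length - 1) 0 = 0 ∧ A'.getD A.length 0 = 0)) := by
  rw [sparseEnc, sparseEnc, master]
  constructor
  · rintro ⟨B, rfl, hc⟩
    have hB : B ≠ [] := by rintro rfl; simp at hne
    refine ⟨⟨B, rfl⟩, ?_⟩
    rintro ⟨h1, h2⟩
    exact hc ⟨(getD_last hA).mp h1, (getD_head hB).mp h2⟩
  · rintro ⟨⟨B, rfl⟩, hc⟩
    have hB : B ≠ [] := by rintro rfl; simp at hne
    exact ⟨B, rfl, fun hh => hc ⟨(getD_last hA).mpr hh.1, (getD_head hB).mpr hh.2⟩⟩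

end SyncFormal
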